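/- For a symmetric sequence B of R-modules and a finite-rank free R-module V, there is a natural isomorphism (σB)(V) ≅ B(V) ⊗ V of R-modules, where (σB)(n) = Ind_{S_{n-1}}^{S_n} B(n-1) and B(V) = ⊕_n B(n) ⊗_{S_n} V^{⊗n} is the Schur functor. -/

import Mathlib

open TensorProduct PiTensorProduct DirectSum

universe u

variable (R : Type u) [CommRing R]

section Coinv

variable (G : Type*) [Group G]
variable (B : Type u) [AddCommGroup B] [Module R B] (ρ : G → B →ₗ[R] B)
variable (T : Type u) [AddCommGroup T] [Module R T] (π : G → T →ₗ[R] T)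

/-- The relations defining the coinvariants tensor product `B ⊗_G T` of a right
`G`-module `B` (action `ρ`) and a left `G`-module `T` (action `π`). -/
def coinvRel : Submodule R (B ⊗[R] T) :=
  Submodule.span R
    {x | ∃ (b : B) (t : T) (g : G), x = (ρ g b) ⊗ₜ[R] t - b ⊗ₜ[R] (π g t)}

/-- The coinvariants tensor product `B ⊗_G T`. -/
abbrev Coinv : Type u := (B ⊗[R] T) ⧸ coinvRel R G B ρ T π

end Coinv

/-- The (left) action of a permutation on the `n`-th tensor power of `V`, permuting the
tensor factors. -/
noncomputable def permAct (V : Type u) [AddCommGroup V] [Module R V] (n : ℕ)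
    (g : Equiv.Perm (Fin n)) : (⨂[R] _ : Fin n, V) →ₗ[R] (⨂[R] _ : Fin n, V) :=
  (PiTensorProduct.reindex R (fun _ : Fin n => V) g).toLinearMap

/-- The Schur functor of a symmetric sequence `{Mn n}` (with right `S_n`-actions `act n`):
`B(V) = ⊕ₙ B(n) ⊗_{Sₙ} V^{⊗n}`. -/
noncomputable abbrev Schur (Mn : ℕ → Type u) [∀ n, AddCommGroup (Mn n)]
    [∀ n, Module R (Mn n)] (act : ∀ n, Equiv.Perm (Fin n) → Mn n →ₗ[R] Mn n)
    (V : Type u) [AddCommGroup V] [Module R V] : Type u :=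
  ⨁ n : ℕ,
    Coinv R (Equiv.Perm (Fin n)) (Mn n) (act n) (⨂[R] _ : Fin n, V) (permAct R V n)

section Emb

/-- The standard embedding `S_n → S_{n+1}` (stabilizer of the last point). -/
def embHom (n : ℕ) : Equiv.Perm (Fin n) →* Equiv.Perm (Fin (n + 1)) where
  toFun g := Equiv.permCongr finSumFinEquiv (Equiv.sumCongr g (Equiv.refl (Fin 1)))
  map_one' := by
    ext x
    simp [Equiv.permCongr_apply]
  map_mul' g h := by
    ext x
    simp only [Equiv.permCongr_apply, Equiv.Perm.mul_apply, Equiv.symm_apply_apply]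
    generalize finSumFinEquiv.symm x = y
    cases y <;> simp [Equiv.Perm.mul_apply]

end Emb

section Ind

variable (n : ℕ) (B : Type u) [AddCommGroup B] [Module R B]
variable (ρ : Equiv.Perm (Fin n) → B →ₗ[R] B)

/-- Relations for the induced module `Ind_{S_n}^{S_{n+1}} B` of a right `S_n`-module
(the group algebra `R[S_{n+1}]` being realized as the function module
`S_{n+1} → R`, with basis the indicator functions `Pi.single g 1`). -/
def indRel : Submodule R (B ⊗[R] (Equiv.Perm (Fin (n + 1)) → R)) :=
  Submodule.span R
    {x | ∃ (b : B) (g : Equiv.Perm (Fin (n + 1))) (h : Equiv.Perm (Fin n)),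
      x = (ρ h b) ⊗ₜ[R] Pi.single g (1 : R) -
        b ⊗ₜ[R] Pi.single (embHom n h * g) (1 : R)}

/-- The induced module `Ind_{S_n}^{S_{n+1}} B = B ⊗_{R[S_n]} R[S_{n+1}]` of a right
`S_n`-module `B`. -/
abbrev Ind : Type u := (B ⊗[R] (Equiv.Perm (Fin (n + 1)) → R)) ⧸ indRel R n B ρ

/-- Right translation by `g₀` on the group algebra `R[S_{n+1}]`. -/
noncomputable def shift (g₀ : Equiv.Perm (Fin (n + 1))) :
    (Equiv.Perm (Fin (n + 1)) → R) →ₗ[R] (Equiv.Perm (Fin (n + 1)) → R) :=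
  LinearMap.funLeft R R (fun x => x * g₀⁻¹)

lemma shift_single (g g₀ : Equiv.Perm (Fin (n + 1))) :
    shift R n g₀ (Pi.single g (1 : R)) = Pi.single (g * g₀) (1 : R) := by
  funext x
  simp [shift, LinearMap.funLeft_apply, Pi.single_apply, mul_inv_eq_iff_eq_mul]

/-- The right `S_{n+1}`-action on `Ind_{S_n}^{S_{n+1}} B`, induced by right translation. -/
noncomputable def indAct (g₀ : Equiv.Perm (Fin (n + 1))) :
    Ind R n B ρ →ₗ[R] Ind R n B ρ :=
  Submodule.mapQ _ _ (TensorProduct.map LinearMap.id (shift R n g₀)) (by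
    refine Submodule.span_le.2 ?_
    rintro x ⟨b, g, h, rfl⟩
    simp only [SetLike.mem_coe, Submodule.mem_comap, map_sub, TensorProduct.map_tmul,
      LinearMap.id_coe, id_eq, shift_single]
    exact Submodule.subset_span ⟨b, g * g₀, h, by rw [mul_assoc]⟩)

end Ind

section Sigma

variable (Mn : ℕ → Type u) [∀ n, AddCommGroup (Mn n)] [∀ n, Module R (Mn n)]
variable (act : ∀ n, Equiv.Perm (Fin n) → Mn n →ₗ[R] Mn n)

/-- The symmetric sequence `σB`: `(σB)(0) = 0` and `(σB)(n+1) = Ind_{S_n}^{S_{n+1}} B(n)`. -/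
noncomputable def sigmaM : ℕ → Type u
  | 0 => (⊥ : Submodule R R)
  | (n + 1) => Ind R n (Mn n) (act n)

noncomputable instance sigmaM.addCommGroup : ∀ k, AddCommGroup (sigmaM R Mn act k)
  | 0 => inferInstanceAs (AddCommGroup (⊥ : Submodule R R))
  | (n + 1) => inferInstanceAs (AddCommGroup (Ind R n (Mn n) (act n)))

noncomputable instance sigmaM.module : ∀ k, Module R (sigmaM R Mn act k)
  | 0 => inferInstanceAs (Module R (⊥ : Submodule R R))
  | (n + 1) => inferInstanceAs (Module R (Ind R n (Mn n) (act n)))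

/-- The right `S_k`-actions on `σB`. -/
noncomputable def sigmaAct :
    ∀ k, Equiv.Perm (Fin k) → sigmaM R Mn act k →ₗ[R] sigmaM R Mn act k
  | 0 => fun _ => LinearMap.id
  | (n + 1) => fun g => indAct R n (Mn n) (act n) g

end Sigma

section Split

variable (V : Type u) [AddCommGroup V] [Module R V] (n : ℕ)

/-- Splitting the last tensor factor: `V^{⊗(n+1)} ≅ V^{⊗n} ⊗ V`. -/
noncomputable def splitE : (⨂[R] _ : Fin (n + 1), V) ≃ₗ[R] (⨂[R] _ : Fin n, V) ⊗[R] V :=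
  ((PiTensorProduct.reindex R (fun _ : Fin (n + 1) => V) finSumFinEquiv.symm).trans
    (PiTensorProduct.tmulEquiv R V).symm).trans
    (TensorProduct.congr (LinearEquiv.refl R _) (PiTensorProduct.subsingletonEquiv 0))

lemma splitE_tprod (V : Type u) [AddCommGroup V] [Module R V] (n : ℕ) (f : Fin (n + 1) → V) :
    splitE R V n (tprod R f) =
      (⨂ₜ[R] i : Fin n, f (Fin.castAdd 1 i)) ⊗ₜ[R] f (Fin.last n) := by
  simp only [splitE, Equiv.symm_symm, LinearEquiv.trans_apply, LinearEquiv.coe_coe]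
  rw [PiTensorProduct.reindex_tprod, PiTensorProduct.tmulEquiv_symm_apply]
  simp only [TensorProduct.congr_tmul, LinearEquiv.refl_apply,
    PiTensorProduct.subsingletonEquiv_apply_tprod, Function.comp_apply]
  have h1 : ∀ i : Fin n, finSumFinEquiv.symm.symm (Sum.inl i) = Fin.castAdd 1 i :=
    fun i => by simp
  have h2 : finSumFinEquiv.symm.symm (Sum.inr 0) = Fin.last n := by
    simp [finSumFinEquiv_apply_right]
    ext
    simp
  rw [h2]
  exact congrArg (· ⊗ₜ[R] f (Fin.last n))
    (congrArg (PiTensorProduct.tprod R) (funext fun i => congrArg f (h1 i)))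
lemma permAct_mul (g h : Equiv.Perm (Fin n)) :
    permAct R V n (g * h) = permAct R V n g ∘ₗ permAct R V n h := by
  have := PiTensorProduct.reindex_trans (R := R) (s := fun _ : Fin n => V)
    (h : Fin n ≃ Fin n) (g : Fin n ≃ Fin n)
  rw [permAct, permAct, permAct]
  rw [show ((g * h : Equiv.Perm (Fin n)) : Fin n ≃ Fin n) = (h : Fin n ≃ Fin n).trans g from rfl,
    ← this]
  rfl

lemma permAct_one : permAct R V n 1 = LinearMap.id := by
  rw [permAct, show ((1 : Equiv.Perm (Fin n)) : Fin n ≃ Fin n) = Equiv.refl (Fin n) from rfl,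
    PiTensorProduct.reindex_refl]
  rfl

end Split

lemma embHom_castAdd (n : ℕ) (h : Equiv.Perm (Fin n)) (i : Fin n) :
    embHom n h (Fin.castAdd 1 i) = Fin.castAdd 1 (h i) := by
  simp [embHom, Equiv.permCongr_apply]

lemma embHom_last (n : ℕ) (h : Equiv.Perm (Fin n)) :
    embHom n h (Fin.last n) = Fin.last n := by
  have hlast : finSumFinEquiv.symm (Fin.last n) = Sum.inr (0 : Fin 1) := by
    rw [show (Fin.last n) = Fin.natAdd n 0 from Fin.ext (by simp), finSumFinEquiv_symm_apply_natAdd]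
  simp [embHom, Equiv.permCongr_apply, hlast]
  exact Fin.ext (by simp)

lemma embHom_symm_castAdd (n : ℕ) (h : Equiv.Perm (Fin n)) (i : Fin n) :
    (embHom n h : Equiv.Perm (Fin (n+1))).symm (Fin.castAdd 1 i) = Fin.castAdd 1 (h.symm i) := by
  rw [Equiv.symm_apply_eq, embHom_castAdd, Equiv.apply_symm_apply]

lemma embHom_symm_last (n : ℕ) (h : Equiv.Perm (Fin n)) :
    (embHom n h : Equiv.Perm (Fin (n+1))).symm (Fin.last n) = Fin.last n := by
  rw [Equiv.symm_apply_eq, embHom_last]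

lemma splitE_perm (V : Type u) [AddCommGroup V] [Module R V] (n : ℕ) (h : Equiv.Perm (Fin n)) :
    (splitE R V n).toLinearMap ∘ₗ permAct R V (n + 1) (embHom n h) =
      TensorProduct.map (permAct R V n h) LinearMap.id ∘ₗ (splitE R V n).toLinearMap := by
  ext f
  simp only [LinearMap.compMultilinearMap_apply, LinearMap.coe_comp, Function.comp_apply,
    LinearEquiv.coe_coe, permAct, PiTensorProduct.reindex_tprod]
  rw [splitE_tprod, splitE_tprod, TensorProduct.map_tmul]
  simp only [LinearEquiv.coe_coe, PiTensorProduct.reindex_tprod, LinearMap.id_coe, id_eq]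
  rw [embHom_symm_last]
  exact congrArg (· ⊗ₜ[R] f (Fin.last n))
    (congrArg (PiTensorProduct.tprod R)
      (funext fun i => congrArg f (embHom_symm_castAdd n h i)))

section Key

variable (n : ℕ) (B : Type u) [AddCommGroup B] [Module R B]
variable (ρ : Equiv.Perm (Fin n) → B →ₗ[R] B)
variable (V : Type u) [AddCommGroup V] [Module R V]

/-- Quotient map onto `B ⊗_{Sₙ} V^{⊗n}` tensored with `V`, with `b` plugged in. -/
noncomputable def zeta (b : B) :
    ((⨂[R] _ : Fin n, V) ⊗[R] V) →ₗ[R]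
      (Coinv R (Equiv.Perm (Fin n)) B ρ (⨂[R] _ : Fin n, V) (permAct R V n)) ⊗[R] V :=
  (TensorProduct.map
      (coinvRel R (Equiv.Perm (Fin n)) B ρ (⨂[R] _ : Fin n, V) (permAct R V n)).mkQ
      LinearMap.id) ∘ₗ
    (TensorProduct.assoc R B (⨂[R] _ : Fin n, V) V).symm.toLinearMap ∘ₗ
      (TensorProduct.mk R B ((⨂[R] _ : Fin n, V) ⊗[R] V) b)

lemma zeta_tmul (b : B) (u : ⨂[R] _ : Fin n, V) (v : V) :
    zeta R n B ρ V b (u ⊗ₜ[R] v) =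
      Submodule.Quotient.mk (b ⊗ₜ[R] u) ⊗ₜ[R] v := by
  simp [zeta]

lemma zeta_rel (h : Equiv.Perm (Fin n)) (b : B) :
    zeta R n B ρ V (ρ h b) =
      (zeta R n B ρ V b) ∘ₗ (TensorProduct.map (permAct R V n h) LinearMap.id) := by
  apply TensorProduct.ext'
  intro u v
  simp only [LinearMap.coe_comp, Function.comp_apply, TensorProduct.map_tmul,
    LinearMap.id_coe, id_eq, zeta_tmul]
  congr 1
  exact (Submodule.Quotient.eq _).2 (Submodule.subset_span ⟨b, u, h, rfl⟩)

/-- The basic building block of the forward map. -/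
noncomputable def beta (g : Equiv.Perm (Fin (n + 1))) :
    (B ⊗[R] (⨂[R] _ : Fin (n + 1), V)) →ₗ[R]
      (Coinv R (Equiv.Perm (Fin n)) B ρ (⨂[R] _ : Fin n, V) (permAct R V n)) ⊗[R] V :=
  (TensorProduct.map
      (coinvRel R (Equiv.Perm (Fin n)) B ρ (⨂[R] _ : Fin n, V) (permAct R V n)).mkQ
      LinearMap.id) ∘ₗ
    (TensorProduct.assoc R B (⨂[R] _ : Fin n, V) V).symm.toLinearMap ∘ₗ
      (LinearMap.lTensor B ((splitE R V n).toLinearMap ∘ₗ permAct R V (n + 1) g))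

lemma beta_tmul (g : Equiv.Perm (Fin (n + 1))) (b : B) (t : ⨂[R] _ : Fin (n + 1), V) :
    beta R n B ρ V g (b ⊗ₜ[R] t) =
      zeta R n B ρ V b (splitE R V n (permAct R V (n + 1) g t)) := by
  simp [beta, zeta]

/-- The forward map on the group-algebra coordinate. -/
noncomputable def gammaF :
    (Equiv.Perm (Fin (n + 1)) → R) →ₗ[R]
      ((B ⊗[R] (⨂[R] _ : Fin (n + 1), V)) →ₗ[R]
        (Coinv R (Equiv.Perm (Fin n)) B ρ (⨂[R] _ : Fin n, V) (permAct R V n)) ⊗[R] V) :=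
  ∑ g : Equiv.Perm (Fin (n + 1)), (LinearMap.proj g).smulRight (beta R n B ρ V g)

lemma gammaF_single (g : Equiv.Perm (Fin (n + 1))) :
    gammaF R n B ρ V (Pi.single g 1) = beta R n B ρ V g := by
  rw [gammaF, LinearMap.sum_apply]
  rw [Finset.sum_eq_single g]
  · simp
  · intro g' _ hne
    simp [Pi.single_apply, hne]
  · intro habs
    exact absurd (Finset.mem_univ g) habs

/-- The curried forward map on representatives. -/
noncomputable def Lambda0 :
    B →ₗ[R] (Equiv.Perm (Fin (n + 1)) → R) →ₗ[R]
      ((⨂[R] _ : Fin (n + 1), V) →ₗ[R]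
        (Coinv R (Equiv.Perm (Fin n)) B ρ (⨂[R] _ : Fin n, V) (permAct R V n)) ⊗[R] V) :=
  ((LinearMap.llcomp R (⨂[R] _ : Fin (n + 1), V) (B ⊗[R] (⨂[R] _ : Fin (n + 1), V))
      ((Coinv R (Equiv.Perm (Fin n)) B ρ (⨂[R] _ : Fin n, V) (permAct R V n)) ⊗[R] V)).comp
    (gammaF R n B ρ V)).flip.comp (TensorProduct.mk R B (⨂[R] _ : Fin (n + 1), V))

lemma Lambda0_apply (b : B) (f : Equiv.Perm (Fin (n + 1)) → R)
    (t : ⨂[R] _ : Fin (n + 1), V) :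
    Lambda0 R n B ρ V b f t = gammaF R n B ρ V f (b ⊗ₜ[R] t) := rfl

lemma liftInd_ker :
    indRel R n B ρ ≤ LinearMap.ker (TensorProduct.lift (Lambda0 R n B ρ V)) := by
  rw [indRel, Submodule.span_le]
  rintro x ⟨b, g, h, rfl⟩
  simp only [SetLike.mem_coe, LinearMap.mem_ker, map_sub, TensorProduct.lift.tmul]
  rw [sub_eq_zero]
  apply LinearMap.ext
  intro t
  rw [Lambda0_apply, Lambda0_apply, gammaF_single, gammaF_single, beta_tmul, beta_tmul]
  have hs : splitE R V n (permAct R V (n + 1) (embHom n h * g) t) =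
      TensorProduct.map (permAct R V n h) LinearMap.id
        (splitE R V n (permAct R V (n + 1) g t)) := by
    rw [permAct_mul]
    exact LinearMap.congr_fun (splitE_perm R V n h) (permAct R V (n + 1) g t)
  rw [hs, zeta_rel]
  rfl

/-- The forward map on `Ind ⊗ T`. -/
noncomputable def LambdaT :
    (Ind R n B ρ) ⊗[R] (⨂[R] _ : Fin (n + 1), V) →ₗ[R]
      (Coinv R (Equiv.Perm (Fin n)) B ρ (⨂[R] _ : Fin n, V) (permAct R V n)) ⊗[R] V :=
  TensorProduct.lift
    (Submodule.liftQ (R := R) (M := B ⊗[R] (Equiv.Perm (Fin (n + 1)) → R))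
      (M₂ := (⨂[R] _ : Fin (n + 1), V) →ₗ[R]
        (Coinv R (Equiv.Perm (Fin n)) B ρ (⨂[R] _ : Fin n, V) (permAct R V n)) ⊗[R] V)
      (indRel R n B ρ) (TensorProduct.lift (Lambda0 R n B ρ V)) (liftInd_ker R n B ρ V))

lemma LambdaT_tmul (b : B) (f : Equiv.Perm (Fin (n + 1)) → R)
    (t : ⨂[R] _ : Fin (n + 1), V) :
    LambdaT R n B ρ V (Submodule.Quotient.mk (b ⊗ₜ[R] f) ⊗ₜ[R] t) =
      gammaF R n B ρ V f (b ⊗ₜ[R] t) := rfl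

lemma shift_single' (g g₀ : Equiv.Perm (Fin (n + 1))) (r : R) :
    shift R n g₀ (Pi.single g r) = Pi.single (g * g₀) r := by
  funext x
  simp [shift, LinearMap.funLeft_apply, Pi.single_apply, mul_inv_eq_iff_eq_mul]

lemma indAct_mk (g₀ : Equiv.Perm (Fin (n + 1))) (x : B ⊗[R] (Equiv.Perm (Fin (n + 1)) → R)) :
    indAct R n B ρ g₀ (Submodule.Quotient.mk x) =
      Submodule.Quotient.mk (TensorProduct.map LinearMap.id (shift R n g₀) x) := rfl

lemma LambdaT_single (b : B) (g : Equiv.Perm (Fin (n + 1))) (r : R)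
    (t : ⨂[R] _ : Fin (n + 1), V) :
    LambdaT R n B ρ V (Submodule.Quotient.mk (b ⊗ₜ[R] Pi.single g r) ⊗ₜ[R] t) =
      r • beta R n B ρ V g (b ⊗ₜ[R] t) := by
  rw [LambdaT_tmul]
  have h1 : (Pi.single g r : Equiv.Perm (Fin (n + 1)) → R) = r • (Pi.single g 1 : Equiv.Perm (Fin (n + 1)) → R) := by
    funext x
    simp [Pi.single_apply, mul_comm]
  rw [h1, map_smul, gammaF_single]
  rfl

lemma LambdaT_equivariant (g₀ : Equiv.Perm (Fin (n + 1))) :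
    LambdaT R n B ρ V ∘ₗ
        TensorProduct.map (indAct R n B ρ g₀) LinearMap.id =
      LambdaT R n B ρ V ∘ₗ
        TensorProduct.map LinearMap.id (permAct R V (n + 1) g₀) := by
  apply TensorProduct.ext
  refine Submodule.linearMap_qext (R := R) (M := B ⊗[R] (Equiv.Perm (Fin (n + 1)) → R))
    (M₂ := (⨂[R] _ : Fin (n + 1), V) →ₗ[R]
      (Coinv R (Equiv.Perm (Fin n)) B ρ (⨂[R] _ : Fin n, V) (permAct R V n)) ⊗[R] V)
    (indRel R n B ρ) ?_
  apply TensorProduct.ext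
  apply LinearMap.ext
  intro b
  apply LinearMap.pi_ext'
  intro g
  apply LinearMap.ext
  intro r
  apply LinearMap.ext
  intro t
  simp only [LinearMap.coe_comp, Function.comp_apply,
    TensorProduct.mk_apply, LinearMap.compr₂_apply, LinearMap.compr₂ₛₗ_apply, Submodule.mkQ_apply,
    TensorProduct.map_tmul, LinearMap.id_coe, id_eq, LinearMap.coe_single]
  rw [indAct_mk]
  simp only [TensorProduct.map_tmul, LinearMap.id_coe, id_eq, shift_single']
  rw [LambdaT_single, LambdaT_single, beta_tmul, beta_tmul, permAct_mul]
  rfl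

lemma LambdaT_ker :
    coinvRel R (Equiv.Perm (Fin (n + 1))) (Ind R n B ρ) (indAct R n B ρ)
        (⨂[R] _ : Fin (n + 1), V) (permAct R V (n + 1)) ≤
      LinearMap.ker (LambdaT R n B ρ V) := by
  rw [coinvRel, Submodule.span_le]
  rintro x ⟨xI, t, g₀, rfl⟩
  simp only [SetLike.mem_coe, LinearMap.mem_ker, map_sub, sub_eq_zero]
  have := LinearMap.congr_fun (LambdaT_equivariant R n B ρ V g₀) (xI ⊗ₜ[R] t)
  simpa using this

/-- The forward map `(Ind B) ⊗_{S_{n+1}} V^{⊗(n+1)} → (B ⊗_{Sₙ} V^{⊗n}) ⊗ V`. -/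
noncomputable def fwd :
    Coinv R (Equiv.Perm (Fin (n + 1))) (Ind R n B ρ) (indAct R n B ρ)
        (⨂[R] _ : Fin (n + 1), V) (permAct R V (n + 1)) →ₗ[R]
      (Coinv R (Equiv.Perm (Fin n)) B ρ (⨂[R] _ : Fin n, V) (permAct R V n)) ⊗[R] V :=
  Submodule.liftQ _ (LambdaT R n B ρ V) (LambdaT_ker R n B ρ V)

/-- The canonical map `B → Ind B`, `b ↦ b ⊗ δ₁`. -/
noncomputable def iotaB : B →ₗ[R] Ind R n B ρ :=
  (indRel R n B ρ).mkQ ∘ₗ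
    ((TensorProduct.mk R B (Equiv.Perm (Fin (n + 1)) → R)).flip (Pi.single 1 1))

/-- The backward map on representatives. -/
noncomputable def theta :
    (B ⊗[R] (⨂[R] _ : Fin n, V)) ⊗[R] V →ₗ[R]
      Coinv R (Equiv.Perm (Fin (n + 1))) (Ind R n B ρ) (indAct R n B ρ)
        (⨂[R] _ : Fin (n + 1), V) (permAct R V (n + 1)) :=
  (coinvRel R (Equiv.Perm (Fin (n + 1))) (Ind R n B ρ) (indAct R n B ρ)
      (⨂[R] _ : Fin (n + 1), V) (permAct R V (n + 1))).mkQ ∘ₗ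
    (TensorProduct.map (iotaB R n B ρ) (splitE R V n).symm.toLinearMap) ∘ₗ
      (TensorProduct.assoc R B (⨂[R] _ : Fin n, V) V).toLinearMap

lemma theta_tmul (b : B) (u : ⨂[R] _ : Fin n, V) (v : V) :
    theta R n B ρ V ((b ⊗ₜ[R] u) ⊗ₜ[R] v) =
      Submodule.Quotient.mk (iotaB R n B ρ b ⊗ₜ[R] (splitE R V n).symm (u ⊗ₜ[R] v)) := by
  simp [theta]

lemma qC_rel (x : Ind R n B ρ) (g : Equiv.Perm (Fin (n + 1)))
    (t : ⨂[R] _ : Fin (n + 1), V) :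
    (Submodule.Quotient.mk (indAct R n B ρ g x ⊗ₜ[R] t) :
        Coinv R (Equiv.Perm (Fin (n + 1))) (Ind R n B ρ) (indAct R n B ρ)
          (⨂[R] _ : Fin (n + 1), V) (permAct R V (n + 1))) =
      Submodule.Quotient.mk (x ⊗ₜ[R] permAct R V (n + 1) g t) :=
  (Submodule.Quotient.eq _).2 (Submodule.subset_span ⟨x, t, g, rfl⟩)

lemma iotaB_rho (h : Equiv.Perm (Fin n)) (b : B) :
    iotaB R n B ρ (ρ h b) = indAct R n B ρ (embHom n h) (iotaB R n B ρ b) := by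
  rw [iotaB]
  simp only [LinearMap.coe_comp, Function.comp_apply, LinearMap.flip_apply,
    TensorProduct.mk_apply, Submodule.mkQ_apply]
  rw [indAct_mk]
  simp only [TensorProduct.map_tmul, LinearMap.id_coe, id_eq, shift_single', one_mul]
  refine (Submodule.Quotient.eq _).2 (Submodule.subset_span ⟨b, 1, h, ?_⟩)
  rw [mul_one]

lemma perm_emb_symm (h : Equiv.Perm (Fin n)) (x : (⨂[R] _ : Fin n, V) ⊗[R] V) :
    permAct R V (n + 1) (embHom n h) ((splitE R V n).symm x) =
      (splitE R V n).symm (TensorProduct.map (permAct R V n h) LinearMap.id x) := by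
  apply (splitE R V n).injective
  rw [LinearEquiv.apply_symm_apply]
  exact (LinearMap.congr_fun (splitE_perm R V n h) ((splitE R V n).symm x)).trans
    (by rw [LinearMap.coe_comp, Function.comp_apply, LinearEquiv.coe_coe,
      LinearEquiv.apply_symm_apply])

lemma theta_ker :
    coinvRel R (Equiv.Perm (Fin n)) B ρ (⨂[R] _ : Fin n, V) (permAct R V n) ≤
      LinearMap.ker (TensorProduct.curry (theta R n B ρ V)) := by
  rw [coinvRel, Submodule.span_le]
  rintro x ⟨b, u, h, rfl⟩
  simp only [SetLike.mem_coe, LinearMap.mem_ker, map_sub, sub_eq_zero]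
  apply LinearMap.ext
  intro v
  simp only [TensorProduct.curry_apply]
  rw [theta_tmul, theta_tmul, iotaB_rho, qC_rel, perm_emb_symm]
  simp

/-- The backward map `(B ⊗_{Sₙ} V^{⊗n}) ⊗ V → (Ind B) ⊗_{S_{n+1}} V^{⊗(n+1)}`. -/
noncomputable def bwd :
    (Coinv R (Equiv.Perm (Fin n)) B ρ (⨂[R] _ : Fin n, V) (permAct R V n)) ⊗[R] V →ₗ[R]
      Coinv R (Equiv.Perm (Fin (n + 1))) (Ind R n B ρ) (indAct R n B ρ)
        (⨂[R] _ : Fin (n + 1), V) (permAct R V (n + 1)) :=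
  TensorProduct.lift
    (Submodule.liftQ _ (TensorProduct.curry (theta R n B ρ V)) (theta_ker R n B ρ V))

lemma bwd_tmul (b : B) (u : ⨂[R] _ : Fin n, V) (v : V) :
    bwd R n B ρ V (Submodule.Quotient.mk (b ⊗ₜ[R] u) ⊗ₜ[R] v) =
      Submodule.Quotient.mk (iotaB R n B ρ b ⊗ₜ[R] (splitE R V n).symm (u ⊗ₜ[R] v)) := by
  rw [bwd, TensorProduct.lift.tmul]
  exact theta_tmul R n B ρ V b u v

lemma bwd_zeta (b : B) :
    bwd R n B ρ V ∘ₗ zeta R n B ρ V b =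
      (coinvRel R (Equiv.Perm (Fin (n + 1))) (Ind R n B ρ) (indAct R n B ρ)
          (⨂[R] _ : Fin (n + 1), V) (permAct R V (n + 1))).mkQ ∘ₗ
        (TensorProduct.mk R (Ind R n B ρ) (⨂[R] _ : Fin (n + 1), V)
          (iotaB R n B ρ b)) ∘ₗ (splitE R V n).symm.toLinearMap := by
  apply TensorProduct.ext'
  intro u v
  simp only [LinearMap.coe_comp, Function.comp_apply, LinearEquiv.coe_coe,
    TensorProduct.mk_apply, Submodule.mkQ_apply, zeta_tmul]
  exact bwd_tmul R n B ρ V b u v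

lemma fwd_mk_single (b : B) (g : Equiv.Perm (Fin (n + 1))) (t : ⨂[R] _ : Fin (n + 1), V) :
    fwd R n B ρ V (Submodule.Quotient.mk
        (Submodule.Quotient.mk (b ⊗ₜ[R] Pi.single g 1) ⊗ₜ[R] t)) =
      zeta R n B ρ V b (splitE R V n (permAct R V (n + 1) g t)) := by
  rw [fwd, Submodule.liftQ_apply, LambdaT_tmul, gammaF_single, beta_tmul]

lemma fwd_bwd :
    fwd R n B ρ V ∘ₗ bwd R n B ρ V = LinearMap.id := by
  apply TensorProduct.ext
  apply LinearMap.ext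
  intro d
  apply LinearMap.ext
  intro v
  simp only [LinearMap.compr₂_apply, LinearMap.compr₂ₛₗ_apply, TensorProduct.mk_apply, LinearMap.coe_comp,
    Function.comp_apply, LinearMap.id_coe, id_eq]
  induction d using Submodule.Quotient.induction_on with
  | H y =>
    have : ∀ y : B ⊗[R] (⨂[R] _ : Fin n, V),
        fwd R n B ρ V (bwd R n B ρ V ((Submodule.Quotient.mk y) ⊗ₜ[R] v)) =
          (Submodule.Quotient.mk y) ⊗ₜ[R] v := by
      intro y
      induction y with
      | zero => simp
      | tmul b u =>
        rw [bwd_tmul, fwd, Submodule.liftQ_apply]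
        have h1 : (iotaB R n B ρ b ⊗ₜ[R] (splitE R V n).symm (u ⊗ₜ[R] v)) =
            Submodule.Quotient.mk (b ⊗ₜ[R] (Pi.single 1 1 : Equiv.Perm (Fin (n + 1)) → R))
              ⊗ₜ[R] (splitE R V n).symm (u ⊗ₜ[R] v) := rfl
        rw [h1, LambdaT_tmul, gammaF_single, beta_tmul, permAct_one]
        simp only [LinearMap.id_coe, id_eq, LinearEquiv.apply_symm_apply]
        rw [zeta_tmul]
      | add y₁ y₂ h₁ h₂ =>
        rw [Submodule.Quotient.mk_add, TensorProduct.add_tmul, map_add, map_add, h₁, h₂]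
    exact this y

lemma bwd_fwd :
    bwd R n B ρ V ∘ₗ fwd R n B ρ V = LinearMap.id := by
  apply Submodule.linearMap_qext
  apply TensorProduct.ext
  apply Submodule.linearMap_qext
  apply TensorProduct.ext
  apply LinearMap.ext
  intro b
  apply LinearMap.pi_ext'
  intro g
  apply LinearMap.ext
  intro r
  apply LinearMap.ext
  intro t
  simp only [LinearMap.coe_comp, Function.comp_apply, LinearMap.compr₂_apply, LinearMap.compr₂ₛₗ_apply,
    TensorProduct.mk_apply, Submodule.mkQ_apply, LinearMap.id_coe, id_eq,
    LinearMap.coe_single]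
  have hsingle : (Pi.single g r : Equiv.Perm (Fin (n + 1)) → R) =
      r • (Pi.single g 1 : Equiv.Perm (Fin (n + 1)) → R) := by
    funext x
    simp [Pi.single_apply, mul_comm]
  have hfwd : fwd R n B ρ V (Submodule.Quotient.mk
      (Submodule.Quotient.mk (b ⊗ₜ[R] (Pi.single g r : Equiv.Perm (Fin (n + 1)) → R))
        ⊗ₜ[R] t)) = r • zeta R n B ρ V b (splitE R V n (permAct R V (n + 1) g t)) := by
    rw [fwd, Submodule.liftQ_apply, LambdaT_single, beta_tmul]
  rw [hfwd, map_smul]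
  have hb : bwd R n B ρ V (zeta R n B ρ V b (splitE R V n (permAct R V (n + 1) g t))) =
      Submodule.Quotient.mk (iotaB R n B ρ b ⊗ₜ[R] permAct R V (n + 1) g t) := by
    have := LinearMap.congr_fun (bwd_zeta R n B ρ V b) (splitE R V n (permAct R V (n + 1) g t))
    simp only [LinearMap.coe_comp, Function.comp_apply, LinearEquiv.coe_coe,
      TensorProduct.mk_apply, Submodule.mkQ_apply, LinearEquiv.symm_apply_apply] at this
    exact this
  rw [hb, ← qC_rel]
  have hind : indAct R n B ρ g (iotaB R n B ρ b) =
      Submodule.Quotient.mk (b ⊗ₜ[R] (Pi.single g 1 : Equiv.Perm (Fin (n + 1)) → R)) := by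
    rw [iotaB]
    simp only [LinearMap.coe_comp, Function.comp_apply, LinearMap.flip_apply,
      TensorProduct.mk_apply, Submodule.mkQ_apply]
    rw [indAct_mk]
    simp [shift_single', one_mul]
  rw [hind, hsingle]
  rw [← Submodule.Quotient.mk_smul, TensorProduct.smul_tmul', ← Submodule.Quotient.mk_smul,
    ← TensorProduct.tmul_smul]

/-- The key isomorphism `Ind_{Sₙ}^{S_{n+1}} B ⊗_{S_{n+1}} V^{⊗(n+1)} ≅ (B ⊗_{Sₙ} V^{⊗n}) ⊗ V`. -/
noncomputable def keyEquiv :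
    Coinv R (Equiv.Perm (Fin (n + 1))) (Ind R n B ρ) (indAct R n B ρ)
        (⨂[R] _ : Fin (n + 1), V) (permAct R V (n + 1)) ≃ₗ[R]
      (Coinv R (Equiv.Perm (Fin n)) B ρ (⨂[R] _ : Fin n, V) (permAct R V n)) ⊗[R] V :=
  LinearEquiv.ofLinear (fwd R n B ρ V) (bwd R n B ρ V) (fwd_bwd R n B ρ V) (bwd_fwd R n B ρ V)

end Key
section Assemble

variable (Mn : ℕ → Type u) [∀ n, AddCommGroup (Mn n)] [∀ n, Module R (Mn n)]
variable (act : ∀ n, Equiv.Perm (Fin n) → Mn n →ₗ[R] Mn n)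
variable (V : Type u) [AddCommGroup V] [Module R V]

lemma subsingleton_tensor (A : Type u) [AddCommGroup A] [Module R A] [Subsingleton A]
    (T : Type u) [AddCommGroup T] [Module R T] : Subsingleton (A ⊗[R] T) := by
  have h : ∀ x : A ⊗[R] T, x = 0 := by
    intro x
    induction x with
    | zero => rfl
    | tmul a t => rw [Subsingleton.elim a 0, TensorProduct.zero_tmul]
    | add x y hx hy => rw [hx, hy, add_zero]
  exact ⟨fun x y => (h x).trans (h y).symm⟩

lemma subsingleton_C0 :
    Subsingleton (Coinv R (Equiv.Perm (Fin 0)) (sigmaM R Mn act 0) (sigmaAct R Mn act 0)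
      (⨂[R] _ : Fin 0, V) (permAct R V 0)) := by
  haveI : Subsingleton (sigmaM R Mn act 0) := by
    constructor
    rintro ⟨a, ha⟩ ⟨b, hb⟩
    simp only [Submodule.mem_bot] at ha hb
    subst ha hb
    rfl
  haveI := subsingleton_tensor R (sigmaM R Mn act 0) (⨂[R] _ : Fin 0, V)
  exact (Submodule.Quotient.mk_surjective _).subsingleton

/-- Forward components of the assembled isomorphism. -/
noncomputable def compFwd : ∀ k,
    Coinv R (Equiv.Perm (Fin k)) (sigmaM R Mn act k) (sigmaAct R Mn act k)
        (⨂[R] _ : Fin k, V) (permAct R V k) →ₗ[R]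
      ⨁ m : ℕ, (Coinv R (Equiv.Perm (Fin m)) (Mn m) (act m) (⨂[R] _ : Fin m, V)
        (permAct R V m)) ⊗[R] V
  | 0 => 0
  | (n + 1) =>
    (DirectSum.lof R ℕ (fun m => (Coinv R (Equiv.Perm (Fin m)) (Mn m) (act m)
        (⨂[R] _ : Fin m, V) (permAct R V m)) ⊗[R] V) n) ∘ₗ
      (keyEquiv R n (Mn n) (act n) V).toLinearMap

/-- Backward components of the assembled isomorphism. -/
noncomputable def compBwd (n : ℕ) :
    (Coinv R (Equiv.Perm (Fin n)) (Mn n) (act n) (⨂[R] _ : Fin n, V)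
        (permAct R V n)) ⊗[R] V →ₗ[R]
      ⨁ k : ℕ, Coinv R (Equiv.Perm (Fin k)) (sigmaM R Mn act k) (sigmaAct R Mn act k)
        (⨂[R] _ : Fin k, V) (permAct R V k) :=
  (DirectSum.lof R ℕ (fun k => Coinv R (Equiv.Perm (Fin k)) (sigmaM R Mn act k)
      (sigmaAct R Mn act k) (⨂[R] _ : Fin k, V) (permAct R V k)) (n + 1)) ∘ₗ
    (keyEquiv R n (Mn n) (act n) V).symm.toLinearMap

/-- The assembled isomorphism `(σB)(V) ≅ ⊕ₙ (B(n) ⊗_{Sₙ} V^{⊗n}) ⊗ V`. -/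
noncomputable def assembled :
    (Schur R (sigmaM R Mn act) (sigmaAct R Mn act) V) ≃ₗ[R]
      ⨁ m : ℕ, (Coinv R (Equiv.Perm (Fin m)) (Mn m) (act m) (⨂[R] _ : Fin m, V)
        (permAct R V m)) ⊗[R] V := by
  refine LinearEquiv.ofLinear
    (DirectSum.toModule R ℕ _ (compFwd R Mn act V))
    (DirectSum.toModule R ℕ _ (compBwd R Mn act V)) ?_ ?_
  · apply DirectSum.linearMap_ext
    intro n
    apply LinearMap.ext
    intro x
    simp only [LinearMap.coe_comp, Function.comp_apply, LinearMap.id_comp]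
    rw [DirectSum.toModule_lof]
    show DirectSum.toModule R ℕ _ (compFwd R Mn act V) (DirectSum.lof R ℕ (fun k => Coinv R (Equiv.Perm (Fin k)) (sigmaM R Mn act k) (sigmaAct R Mn act k) (⨂[R] _ : Fin k, V) (permAct R V k)) (n + 1) ((keyEquiv R n (Mn n) (act n) V).symm x)) = _
    refine (DirectSum.toModule_lof (R := R) (M := (fun k => Coinv R (Equiv.Perm (Fin k)) (sigmaM R Mn act k) (sigmaAct R Mn act k) (⨂[R] _ : Fin k, V) (permAct R V k))) (n + 1) _).trans ?_
    show (compFwd R Mn act V (n + 1)) ((keyEquiv R n (Mn n) (act n) V).symm x) = _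
    show DirectSum.lof R ℕ (fun m => Coinv R (Equiv.Perm (Fin m)) (Mn m) (act m) (⨂[R] _ : Fin m, V) (permAct R V m) ⊗[R] V) n ((keyEquiv R n (Mn n) (act n) V) ((keyEquiv R n (Mn n) (act n) V).symm x)) = _
    exact congrArg _ (LinearEquiv.apply_symm_apply _ x)
  · apply DirectSum.linearMap_ext
    intro k
    match k with
    | 0 =>
      apply LinearMap.ext
      intro x
      haveI := subsingleton_C0 R Mn act V
      rw [Subsingleton.elim x 0, map_zero, map_zero]
    | (n + 1) =>
      apply LinearMap.ext
      intro x
      simp only [LinearMap.coe_comp, Function.comp_apply, LinearMap.id_comp]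
      rw [DirectSum.toModule_lof]
      show DirectSum.toModule R ℕ _ (compBwd R Mn act V) (DirectSum.lof R ℕ (fun m => Coinv R (Equiv.Perm (Fin m)) (Mn m) (act m) (⨂[R] _ : Fin m, V) (permAct R V m) ⊗[R] V) n ((keyEquiv R n (Mn n) (act n) V) x)) = _
      rw [DirectSum.toModule_lof]
      show DirectSum.lof R ℕ (fun k => Coinv R (Equiv.Perm (Fin k)) (sigmaM R Mn act k) (sigmaAct R Mn act k) (⨂[R] _ : Fin k, V) (permAct R V k)) (n + 1) ((keyEquiv R n (Mn n) (act n) V).symm ((keyEquiv R n (Mn n) (act n) V) x)) = _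
      exact congrArg _ (LinearEquiv.symm_apply_apply _ x)

end Assemble

/-- For a symmetric sequence `B` and a finite-rank free `R`-module `V`, there is a natural
isomorphism `(σB)(V) ≅ B(V) ⊗ V` of `R`-modules, where
`(σB)(n) = Ind_{S_{n-1}}^{S_n} B(n-1)` and `B(V)` is the Schur functor. -/
theorem stmt12 (Mn : ℕ → Type u) [∀ n, AddCommGroup (Mn n)] [∀ n, Module R (Mn n)]
    (act : ∀ n, Equiv.Perm (Fin n) → Mn n →ₗ[R] Mn n)
    (hone : ∀ n, act n 1 = LinearMap.id)
    (hmul : ∀ n g h, act n (g * h) = (act n h) ∘ₗ (act n g))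
    (V : Type u) [AddCommGroup V] [Module R V] [Module.Free R V] [Module.Finite R V] :
    Nonempty ((Schur R (sigmaM R Mn act) (sigmaAct R Mn act) V) ≃ₗ[R]
      ((Schur R Mn act V) ⊗[R] V)) := by
  exact ⟨(assembled R Mn act V).trans
    (TensorProduct.directSumLeft R R (fun m => Coinv R (Equiv.Perm (Fin m)) (Mn m) (act m)
      (⨂[R] _ : Fin m, V) (permAct R V m)) V).symm⟩
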